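/- Let J, K ⊆ I be disjoint and P, Q ⊆ I be disjoint. Then σ_{J,K} ∩ σ_{P,Q} = σ_{J∩P, K∩Q}. -/
import Mathlib

open Matrix

/-- The `j`-th simple coroot `α^∨_j := Σ_i C_{ij} e_i`, i.e. the `j`-th column of `C`. -/
def acoroot {n : ℕ} (C : Matrix (Fin n) (Fin n) ℝ) (j : Fin n) : Fin n → ℝ :=
  fun i => C i j

/-- The cone `σ_{J,K}` of nonnegative linear combinations of the `-α^∨_j` (`j ∈ J`)
and the standard basis vectors `e_k` (`k ∈ K`). -/
def sigmaCone {n : ℕ} (C : Matrix (Fin n) (Fin n) ℝ) (J K : Finset (Fin n)) :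
    Set (Fin n → ℝ) :=
  {v | ∃ x y : Fin n → ℝ, (∀ j ∈ J, 0 ≤ x j) ∧ (∀ k ∈ K, 0 ≤ y k) ∧
    v = (∑ j ∈ J, x j • (-acoroot C j)) + ∑ k ∈ K, y k • (Pi.single k 1 : Fin n → ℝ)}

lemma sum_repr {n : ℕ} (C : Matrix (Fin n) (Fin n) ℝ) (J K : Finset (Fin n))
    (x y : Fin n → ℝ) (hx : ∀ i ∉ J, x i = 0) (hy : ∀ i ∉ K, y i = 0) :
    (∑ j ∈ J, x j • (-acoroot C j)) + ∑ k ∈ K, y k • (Pi.single k 1 : Fin n → ℝ)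
      = y - C.mulVec x := by
  funext i
  have h1 : (∑ j ∈ J, x j • (-acoroot C j)) i = -(C.mulVec x) i := by
    simp only [Finset.sum_apply, Pi.smul_apply, Pi.neg_apply, acoroot, smul_eq_mul,
      Matrix.mulVec, dotProduct]
    have huniv : ∑ j : Fin n, C i j * x j = ∑ j ∈ J, C i j * x j :=
      (Finset.sum_subset (Finset.subset_univ J)
        (fun j _ hj => by rw [hx j hj, mul_zero])).symm
    rw [huniv, ← Finset.sum_neg_distrib]
    exact Finset.sum_congr rfl fun j _ => by ring
  have h2 : (∑ k ∈ K, y k • (Pi.single k 1 : Fin n → ℝ)) i = y i := by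
    simp only [Finset.sum_apply, Pi.smul_apply, Pi.single_apply, smul_eq_mul,
      mul_ite, mul_one, mul_zero]
    rw [Finset.sum_ite_eq K i y]
    by_cases h : i ∈ K
    · simp [h]
    · simp [h, hy i h]
  simp only [Pi.add_apply, Pi.sub_apply, h1, h2]
  ring

lemma mem_sigmaCone_iff {n : ℕ} (C : Matrix (Fin n) (Fin n) ℝ) (J K : Finset (Fin n))
    (v : Fin n → ℝ) :
    v ∈ sigmaCone C J K ↔ ∃ x y : Fin n → ℝ, (∀ i, 0 ≤ x i) ∧ (∀ i, 0 ≤ y i) ∧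
      (∀ i ∉ J, x i = 0) ∧ (∀ i ∉ K, y i = 0) ∧ v = y - C.mulVec x := by
  constructor
  · rintro ⟨x, y, hx, hy, rfl⟩
    refine ⟨fun i => if i ∈ J then x i else 0, fun i => if i ∈ K then y i else 0,
      ?_, ?_, ?_, ?_, ?_⟩
    · intro i; by_cases h : i ∈ J <;> simp [h, hx i]
    · intro i; by_cases h : i ∈ K <;> simp [h, hy i]
    · intro i h; simp [h]
    · intro i h; simp [h]
    · rw [← sum_repr C J K _ _ (fun i h => by simp [h]) (fun i h => by simp [h])]
      congr 1
      · exact Finset.sum_congr rfl fun j hj => by simp [hj]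
      · exact Finset.sum_congr rfl fun k hk => by simp [hk]
  · rintro ⟨x, y, hx, hy, hxs, hys, rfl⟩
    exact ⟨x, y, fun j _ => hx j, fun k _ => hy k, (sum_repr C J K x y hxs hys).symm⟩

/-- M-matrix sign lemma. -/
lemma key_lemma {n : ℕ} (C : Matrix (Fin n) (Fin n) ℝ)
    (hoff : ∀ i j, i ≠ j → C i j ≤ 0)
    (hprin : ∀ S : Finset (Fin n), S.Nonempty →
      IsUnit (C.submatrix (fun a : S => (a : Fin n)) (fun a : S => (a : Fin n))) ∧
      ∀ i j : S,
        0 ≤ (C.submatrix (fun a : S => (a : Fin n)) (fun a : S => (a : Fin n)))⁻¹ i j)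
    (d : Fin n → ℝ) (hsign : ∀ i, 0 < d i → (C.mulVec d) i ≤ 0) :
    ∀ i, d i ≤ 0 := by
  by_contra h
  push_neg at h
  obtain ⟨i0, hi0⟩ := h
  set T : Finset (Fin n) := Finset.univ.filter (fun i => 0 < d i) with hT
  have hTne : T.Nonempty := ⟨i0, by simp [hT, hi0]⟩
  obtain ⟨hunit, hinv⟩ := hprin T hTne
  set sub := C.submatrix (fun a : T => (a : Fin n)) (fun a : T => (a : Fin n)) with hsub
  set u : T → ℝ := fun a => d a with hu
  have hmem : ∀ a : T, 0 < d (a : Fin n) := fun a => by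
    have h := a.2
    exact (Finset.mem_filter.mp h).2
  have h1 : ∀ i : T, sub.mulVec u i ≤ 0 := by
    intro i
    have hsplit : (C.mulVec d) (i : Fin n)
        = ∑ j ∈ T, C i j * d j + ∑ j ∈ Tᶜ, C i j * d j := by
      simp only [Matrix.mulVec, dotProduct]
      rw [← Finset.sum_add_sum_compl T]
    have hc : ∀ j ∈ Tᶜ, 0 ≤ C i j * d j := by
      intro j hj
      rw [Finset.mem_compl, hT, Finset.mem_filter] at hj
      push_neg at hj
      have hdj : d j ≤ 0 := hj (Finset.mem_univ j)
      have hne : (i : Fin n) ≠ j := by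
        rintro rfl
        exact absurd (hmem i) (not_lt.mpr hdj)
      have hC : C i j ≤ 0 := hoff _ _ hne
      nlinarith
    have hsum2 : 0 ≤ ∑ j ∈ Tᶜ, C i j * d j := Finset.sum_nonneg hc
    have hsubval : sub.mulVec u i = ∑ j ∈ T, C i j * d j := by
      simp only [Matrix.mulVec, dotProduct, hsub, Matrix.submatrix_apply, hu]
      rw [← Finset.sum_coe_sort T (fun j => C i j * d j)]
    have hb : (C.mulVec d) (i : Fin n) ≤ 0 := hsign _ (hmem i)
    rw [hsubval]
    linarith [hsplit ▸ hb]
  have hinvmul : sub⁻¹ * sub = 1 :=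
    Matrix.nonsing_inv_mul sub ((Matrix.isUnit_iff_isUnit_det sub).mp hunit)
  have h2 : ∀ i : T, u i ≤ 0 := by
    intro i
    have : u = sub⁻¹.mulVec (sub.mulVec u) := by
      rw [Matrix.mulVec_mulVec, hinvmul, Matrix.one_mulVec]
    rw [this]
    simp only [Matrix.mulVec, dotProduct]
    exact Finset.sum_nonpos fun j _ => mul_nonpos_of_nonneg_of_nonpos (hinv i j) (h1 j)
  obtain ⟨a, ha⟩ := hTne
  exact absurd (hmem ⟨a, ha⟩) (not_lt.mpr (h2 ⟨a, ha⟩))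

theorem stmt_2
    (n : ℕ) (hn : 1 ≤ n) (C : Matrix (Fin n) (Fin n) ℝ)
    (hdiag : ∀ i, C i i = 2)
    (hoff : ∀ i j, i ≠ j → C i j ≤ 0)
    (hprin : ∀ S : Finset (Fin n), S.Nonempty →
      IsUnit (C.submatrix (fun a : S => (a : Fin n)) (fun a : S => (a : Fin n))) ∧
      ∀ i j : S,
        0 ≤ (C.submatrix (fun a : S => (a : Fin n)) (fun a : S => (a : Fin n)))⁻¹ i j)
    (J K : Finset (Fin n)) (hJK : Disjoint J K)
    (P Q : Finset (Fin n)) (hPQ : Disjoint P Q) :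
    sigmaCone C J K ∩ sigmaCone C P Q = sigmaCone C (J ∩ P) (K ∩ Q) := by
  ext v
  simp only [Set.mem_inter_iff, mem_sigmaCone_iff]
  constructor
  · rintro ⟨⟨x, y, hx, hy, hxs, hys, hv⟩, ⟨x', y', hx', hy', hxs', hys', hv'⟩⟩
    -- C (x' - x) = y' - y
    have hkey : C.mulVec (x' - x) = y' - y := by
      have : y - C.mulVec x = y' - C.mulVec x' := hv ▸ hv'
      rw [Matrix.mulVec_sub]
      funext i
      have := congrFun this i
      simp at this ⊢
      linarith
    have hd1 : ∀ i, (x' - x) i ≤ 0 := by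
      apply key_lemma C hoff hprin
      intro i hi
      rw [hkey]
      have hxpos : 0 < x' i := by
        simp only [Pi.sub_apply] at hi
        linarith [hx i]
      have hiP : i ∈ P := by
        by_contra h
        exact absurd (hxs' i h) (ne_of_gt hxpos)
      have hiQ : i ∉ Q := fun h => (Finset.disjoint_left.mp hPQ hiP) h
      simp [Pi.sub_apply, hys' i hiQ]
      exact hy i
    have hd2 : ∀ i, (x - x') i ≤ 0 := by
      apply key_lemma C hoff hprin
      intro i hi
      have hkey2 : C.mulVec (x - x') = y - y' := by
        rw [Matrix.mulVec_sub]
        rw [Matrix.mulVec_sub] at hkey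
        funext i
        have := congrFun hkey i
        simp at this ⊢
        linarith
      rw [hkey2]
      have hxpos : 0 < x i := by
        simp only [Pi.sub_apply] at hi
        linarith [hx' i]
      have hiJ : i ∈ J := by
        by_contra h
        exact absurd (hxs i h) (ne_of_gt hxpos)
      have hiK : i ∉ K := fun h => (Finset.disjoint_left.mp hJK hiJ) h
      simp [Pi.sub_apply, hys i hiK]
      exact hy' i
    have hxx : x = x' := by
      funext i
      have := hd1 i
      have := hd2 i
      simp only [Pi.sub_apply] at *
      linarith
    have hyy : y = y' := by
      have : y' - y = 0 := by rw [← hkey, hxx, sub_self, Matrix.mulVec_zero]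
      funext i
      have := congrFun this i
      simp at this
      linarith
    refine ⟨x, y, hx, hy, ?_, ?_, hv⟩
    · intro i hi
      rw [Finset.mem_inter] at hi
      push_neg at hi
      by_cases h : i ∈ J
      · rw [hxx]; exact hxs' i (hi h)
      · exact hxs i h
    · intro i hi
      rw [Finset.mem_inter] at hi
      push_neg at hi
      by_cases h : i ∈ K
      · rw [hyy]; exact hys' i (hi h)
      · exact hys i h
  · rintro ⟨x, y, hx, hy, hxs, hys, hv⟩
    exact ⟨⟨x, y, hx, hy, fun i hi => hxs i (fun h => hi (Finset.mem_inter.mp h).1),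
        fun i hi => hys i (fun h => hi (Finset.mem_inter.mp h).1), hv⟩,
      ⟨x, y, hx, hy, fun i hi => hxs i (fun h => hi (Finset.mem_inter.mp h).2),
        fun i hi => hys i (fun h => hi (Finset.mem_inter.mp h).2), hv⟩⟩
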